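/- Assume n is even, n ≥ 2, and a^2 ≠ c^2. Then for every nonzero periodic point X₀ of f, the maximum integer k such that some Y ∈ F_{q^2} hangs at depth k from X₀ equals e + 1; that is, some Y hangs at depth e+1 from X₀, and no Y hangs at depth greater than e+1 from X₀. -/

import Mathlib

namespace Stmt10


/-- multiplicative model map -/
def gm {F : Type*} [Field F] (Cc : F) (n : ℕ) (t : F) : F := Cc * t ^ n

lemma gm_iterate {F : Type*} [Field F] (Cc : F) (n : ℕ) (k : ℕ) (t : F) :
    (gm Cc n)^[k] t = (gm Cc n)^[k] 1 * t ^ n ^ k := by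
  induction k with
  | zero => simp
  | succ k ih =>
    rw [Function.iterate_succ_apply', Function.iterate_succ_apply', ih]
    simp only [gm, one_pow, mul_one, mul_pow, ← pow_mul, ← pow_succ]
    ring

lemma gm_one_succ {F : Type*} [Field F] (Cc : F) (n : ℕ) (k : ℕ) :
    (gm Cc n)^[k + 1] 1 = (gm Cc n)^[k] 1 * Cc ^ n ^ k := by
  rw [Function.iterate_succ_apply, show gm Cc n 1 = Cc by simp [gm], gm_iterate]

lemma periodic_of_injOn {α : Type*} [Finite α] {g : α → α} {S : Set α}
    (hmaps : ∀ x ∈ S, g x ∈ S)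
    (hinj : ∀ x ∈ S, ∀ y ∈ S, g x = g y → x = y) {x : α} (hx : x ∈ S) :
    ∃ k, 1 ≤ k ∧ g^[k] x = x := by
  have hiterS : ∀ (i : ℕ) (z : α), z ∈ S → g^[i] z ∈ S := by
    intro i
    induction i with
    | zero => intro z hz; simpa using hz
    | succ i ih =>
      intro z hz
      rw [Function.iterate_succ_apply']
      exact hmaps _ (ih z hz)
  have cancel : ∀ (mm : ℕ) (u v : α), u ∈ S → v ∈ S → g^[mm] u = g^[mm] v → u = v := by
    intro mm
    induction mm with
    | zero => intro u v _ _ h; simpa using h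
    | succ mm ih =>
      intro u v hu hv h
      rw [Function.iterate_succ_apply', Function.iterate_succ_apply'] at h
      exact ih u v hu hv (hinj _ (hiterS _ _ hu) _ (hiterS _ _ hv) h)
  obtain ⟨i, j, hne, hij⟩ := Finite.exists_ne_map_eq_of_infinite (fun i : ℕ => g^[i] x)
  have key : ∀ i j : ℕ, i < j → g^[i] x = g^[j] x → ∃ k, 1 ≤ k ∧ g^[k] x = x := by
    intro i j hlt hije
    have h1 : g^[i] (g^[j - i] x) = g^[i] x := by
      rw [← Function.iterate_add_apply]
      rw [show i + (j - i) = j by omega]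
      exact hije.symm
    have h2 : g^[j - i] x = x := cancel i _ _ (hiterS _ _ hx) hx h1
    exact ⟨j - i, by omega, h2⟩
  rcases lt_or_gt_of_ne hne with h | h
  · exact key i j h hij
  · exact key j i h hij.symm

lemma nat_sq_sub_one (q : ℕ) (hq : 1 ≤ q) : q ^ 2 - 1 = (q + 1) * (q - 1) := by
  have h2 : 1 ≤ q ^ 2 := Nat.one_le_pow _ _ (by omega)
  zify [hq, h2]
  ring

lemma exists_zeta (F : Type*) [Field F] [Fintype F] (q : ℕ) (hq : 3 ≤ q)
    (hF : Fintype.card F = q ^ 2) :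
    ∃ ζ : Fˣ, orderOf ζ = q - 1 ∧ ∀ x : Fˣ, x ^ (q - 1) = 1 → ∃ i : ℤ, x = ζ ^ i := by
  haveI := Classical.decEq F
  obtain ⟨g, hg⟩ := IsCyclic.exists_generator (α := Fˣ)
  have hord : orderOf g = q ^ 2 - 1 := by
    rw [orderOf_eq_card_of_forall_mem_zpowers hg, Nat.card_eq_fintype_card,
      Fintype.card_units, hF]
  have hfac : q ^ 2 - 1 = (q + 1) * (q - 1) := nat_sq_sub_one q (by omega)
  have hdvd : (q + 1) ∣ q ^ 2 - 1 := ⟨q - 1, hfac⟩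
  refine ⟨g ^ (q + 1), ?_, ?_⟩
  · rw [orderOf_pow' g (by omega : q + 1 ≠ 0), hord, Nat.gcd_eq_right hdvd, hfac,
      Nat.mul_div_cancel_left _ (by omega)]
  · intro x hx
    obtain ⟨i, hi⟩ := Subgroup.mem_zpowers_iff.mp (hg x)
    have h1 : g ^ (i * ((q - 1 : ℕ) : ℤ)) = 1 := by
      rw [zpow_mul, hi, zpow_natCast, hx]
    have h2 : ((q ^ 2 - 1 : ℕ) : ℤ) ∣ i * ((q - 1 : ℕ) : ℤ) := by
      rw [← hord]
      exact orderOf_dvd_iff_zpow_eq_one.mpr h1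
    rw [hfac] at h2
    push_cast at h2
    have hq1 : ((q : ℤ) - 1) ≠ 0 := by
      have : (3 : ℤ) ≤ (q : ℤ) := by exact_mod_cast hq
      omega
    have h2' : (((q : ℤ) + 1) * ((q : ℤ) - 1)) ∣ i * ((q : ℤ) - 1) := by
      convert h2 using 2 <;> push_cast [Nat.cast_sub (by omega : 1 ≤ q)] <;> ring_nf
    have h3 : ((q : ℤ) + 1) ∣ i := by
      exact (mul_dvd_mul_iff_right hq1).mp h2'
    obtain ⟨j, hj⟩ := h3
    refine ⟨j, ?_⟩
    rw [← hi, hj]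
    rw [← zpow_natCast g (q + 1), ← zpow_mul]
    push_cast
    ring_nf



lemma zpow_eq_of_dvd_sub {G : Type*} [Group G] {ζ : G} {N : ℕ} (hord : orderOf ζ = N)
    {x y : ℤ} (h : (N : ℤ) ∣ x - y) : ζ ^ x = ζ ^ y := by
  have h1 : ζ ^ (x - y) = 1 := by
    rw [← orderOf_dvd_iff_zpow_eq_one, hord]; exact h
  rw [zpow_sub] at h1
  rw [← mul_right_cancel_iff (a := (ζ ^ y)⁻¹)]
  rw [mul_inv_cancel]
  exact h1

lemma pow_coset_criterion {G : Type*} [CommGroup G] (ζ : G) (N : ℕ) (hN : 0 < N)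
    (hord : orderOf ζ = N)
    (hgen : ∀ x : G, x ^ N = 1 → ∃ i : ℤ, x = ζ ^ i)
    (mm : ℕ) (_hm : 0 < mm) (t cst : G) (ht : t ^ N = 1) (hcst : cst ^ N = 1) :
    (∃ z : G, z ^ N = 1 ∧ cst * z ^ mm = t) ↔
      t ^ (N / Nat.gcd mm N) = cst ^ (N / Nat.gcd mm N) := by
  set d := Nat.gcd mm N with hd
  have hdN : d ∣ N := Nat.gcd_dvd_right mm N
  have hdm : d ∣ mm := Nat.gcd_dvd_left mm N
  have hd0 : 0 < d := Nat.gcd_pos_of_pos_right mm hN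
  have hNd : d * (N / d) = N := Nat.mul_div_cancel' hdN
  have hNd0 : 0 < N / d := Nat.div_pos (Nat.le_of_dvd hN hdN) hd0
  constructor
  · rintro ⟨z, hz1, rfl⟩
    obtain ⟨m', hm'⟩ := hdm
    have hexp : mm * (N / d) = m' * N := by
      rw [hm', mul_assoc, mul_comm m', ← mul_assoc, hNd, mul_comm]
    rw [mul_pow, ← pow_mul, hexp, mul_comm m', pow_mul, hz1, one_pow, mul_one]
  · intro hcrit
    obtain ⟨i, rfl⟩ := hgen t ht
    obtain ⟨j, rfl⟩ := hgen cst hcst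
    have hdvdij : (d : ℤ) ∣ i - j := by
      have h1 : ζ ^ ((i - j) * ((N / d : ℕ) : ℤ)) = 1 := by
        have : ζ ^ (i * ((N / d : ℕ) : ℤ)) = ζ ^ (j * ((N / d : ℕ) : ℤ)) := by
          rw [zpow_mul, zpow_mul, zpow_natCast, zpow_natCast, hcrit]
        rw [sub_mul, zpow_sub, this, mul_inv_cancel]
      have h2 : (N : ℤ) ∣ (i - j) * ((N / d : ℕ) : ℤ) := by
        have h2' := orderOf_dvd_iff_zpow_eq_one.mpr h1
        rwa [hord] at h2'
      have h3 : (N : ℤ) = (d : ℤ) * ((N / d : ℕ) : ℤ) := by exact_mod_cast hNd.symm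
      rw [h3] at h2
      have hNd0' : ((N / d : ℕ) : ℤ) ≠ 0 := by positivity
      exact (mul_dvd_mul_iff_right hNd0').mp h2
    obtain ⟨k, hk⟩ := hdvdij
    have hbez : (d : ℤ) = mm * Nat.gcdA mm N + N * Nat.gcdB mm N := Nat.gcd_eq_gcd_ab mm N
    refine ⟨ζ ^ (Nat.gcdA mm N * k), ?_, ?_⟩
    · rw [← zpow_natCast, ← zpow_mul, mul_comm, zpow_mul, zpow_natCast]
      rw [show ζ ^ N = 1 from by rw [← hord]; exact pow_orderOf_eq_one ζ, one_zpow]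
    · rw [← zpow_natCast (ζ ^ (Nat.gcdA mm N * k)) mm, ← zpow_mul, ← zpow_add]
      apply zpow_eq_of_dvd_sub hord
      refine ⟨-(Nat.gcdB mm N) * k, ?_⟩
      have : i - j = (d : ℤ) * k := hk
      linear_combination (-k) * hbez - this

lemma nat_core (q n r s e : ℕ) (hq : 3 ≤ q) (hn2 : 2 ≤ n)
    (hrdvd : r ∣ q - 1) (hrcop : Nat.Coprime r n)
    (hrmax : ∀ r' : ℕ, r' ∣ q - 1 → Nat.Coprime r' n → r' ≤ r)
    (hsr : q - 1 = s * r)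
    (he : Nat.gcd (n ^ e) (q - 1) < s)
    (hemax : ∀ e' : ℕ, Nat.gcd (n ^ e') (q - 1) < s → e' ≤ e) :
    (∀ k, Nat.gcd (n ^ k) (q - 1) ∣ s) ∧ s ∣ n ^ (e + 1) ∧
      Nat.gcd (n ^ (e + 1)) (q - 1) = s ∧ Nat.gcd (n ^ (e + 2)) (q - 1) = s ∧
      ¬ s ∣ Nat.lcm ((q - 1) / Nat.gcd n (q - 1)) (Nat.gcd (n ^ e) (q - 1)) := by
  set N := q - 1 with hN
  have hN0 : N ≠ 0 := by omega
  have hn0 : n ≠ 0 := by omega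
  have hr0 : r ≠ 0 := by rintro rfl; simp at hsr; omega
  have hs0 : s ≠ 0 := by rintro rfl; simp at hsr; omega
  have gdvd : ∀ k, Nat.gcd (n ^ k) N ∣ s := by
    intro k
    have hcop : (Nat.gcd (n ^ k) N).Coprime r := by
      apply Nat.Coprime.coprime_dvd_left (Nat.gcd_dvd_left _ _)
      exact (hrcop.symm.pow_left k)
    have hdvdN : Nat.gcd (n ^ k) N ∣ s * r := hsr ▸ Nat.gcd_dvd_right _ _
    exact (Nat.Coprime.dvd_of_dvd_mul_right hcop hdvdN)
  have hge1 : Nat.gcd (n ^ (e + 1)) N = s := by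
    have h1 := gdvd (e + 1)
    have h2 : ¬ Nat.gcd (n ^ (e + 1)) N < s := fun h => by have := hemax (e + 1) h; omega
    have h3 := Nat.le_of_dvd (by omega) h1
    omega
  have hge2 : Nat.gcd (n ^ (e + 2)) N = s := by
    have h1 := gdvd (e + 2)
    have h2 : ¬ Nat.gcd (n ^ (e + 2)) N < s := fun h => by have := hemax (e + 2) h; omega
    have h3 := Nat.le_of_dvd (by omega) h1
    omega
  have hsdvd : s ∣ n ^ (e + 1) := hge1 ▸ Nat.gcd_dvd_left _ _
  refine ⟨gdvd, hsdvd, hge1, hge2, ?_⟩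
  -- the lcm fact
  intro hLdvd
  set ge := Nat.gcd (n ^ e) N with hgedef
  set d1 := Nat.gcd n N with hd1def
  have hge0 : ge ≠ 0 := Nat.gcd_ne_zero_left (pow_ne_zero _ hn0)
  have hd1N : d1 ∣ N := Nat.gcd_dvd_right _ _
  have hq1 : (N / d1) ≠ 0 := by
    have := Nat.div_pos (Nat.le_of_dvd (by omega) hd1N) (Nat.gcd_pos_of_pos_right n (by omega))
    omega
  have hL0 : Nat.lcm (N / d1) ge ≠ 0 := Nat.lcm_ne_zero hq1 hge0
  -- find a prime ℓ with ge.factorization ℓ < s.factorization ℓ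
  have hnotle : ¬ s.factorization ≤ ge.factorization := by
    rw [Nat.factorization_le_iff_dvd hs0 hge0]
    intro hdvd
    have := Nat.le_of_dvd (by omega) hdvd
    omega
  rw [Finsupp.le_def] at hnotle
  push_neg at hnotle
  obtain ⟨ℓ, hℓ⟩ := hnotle
  have hℓpos : 0 < s.factorization ℓ := by omega
  have hℓprime : ℓ.Prime := by
    have hmem : ℓ ∈ s.factorization.support := Finsupp.mem_support_iff.mpr (by omega)
    rw [Nat.support_factorization] at hmem
    exact Nat.prime_of_mem_primeFactors hmem
  -- facts about valuations
  have hfN : N.factorization ℓ = s.factorization ℓ + r.factorization ℓ := by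
    rw [hsr, Nat.factorization_mul hs0 hr0]; rfl
  -- ℓ divides n
  have hℓn : 1 ≤ n.factorization ℓ := by
    by_contra hcon
    have hv0 : n.factorization ℓ = 0 := by omega
    have hℓs : ℓ ∣ s := (hℓprime.dvd_iff_one_le_factorization hs0).mpr hℓpos
    have hℓnotn : ¬ ℓ ∣ n := by
      intro hdvd
      have := (hℓprime.dvd_iff_one_le_factorization hn0).mp hdvd
      omega
    obtain ⟨s', hs'⟩ := hℓs
    have hrl : r * ℓ ∣ N := by
      refine ⟨s', ?_⟩
      rw [hsr, hs']; ring
    have hrlcop : (r * ℓ).Coprime n :=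
      Nat.Coprime.mul hrcop ((Nat.Prime.coprime_iff_not_dvd hℓprime).mpr hℓnotn)
    have h5 := hrmax (r * ℓ) hrl hrlcop
    have h6 : 2 ≤ ℓ := hℓprime.two_le
    nlinarith [Nat.pos_of_ne_zero hr0]
  have hℓr : r.factorization ℓ = 0 := by
    by_contra hcon
    have hℓdr : ℓ ∣ r := (hℓprime.dvd_iff_one_le_factorization hr0).mpr (by omega)
    have hℓdn : ℓ ∣ n := (hℓprime.dvd_iff_one_le_factorization hn0).mpr hℓn
    have h1 : ℓ ∣ 1 := hrcop ▸ Nat.dvd_gcd hℓdr hℓdn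
    have h2 := hℓprime.two_le
    have h3 := Nat.eq_one_of_dvd_one h1
    omega
  have hfNs : N.factorization ℓ = s.factorization ℓ := by omega
  have hfNd1 : (N / d1).factorization ℓ
      = N.factorization ℓ - min (n.factorization ℓ) (N.factorization ℓ) := by
    rw [Nat.factorization_div hd1N, hd1def, Nat.factorization_gcd hn0 hN0]
    rw [Finsupp.tsub_apply, Finsupp.inf_apply]
  have hfL : (Nat.lcm (N / d1) ge).factorization ℓ
      = max ((N / d1).factorization ℓ) (ge.factorization ℓ) := by
    rw [Nat.factorization_lcm hq1 hge0, Finsupp.sup_apply]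
  have hsL : s.factorization ℓ ≤ (Nat.lcm (N / d1) ge).factorization ℓ := by
    rw [← Nat.factorization_le_iff_dvd hs0 hL0] at hLdvd
    exact hLdvd ℓ
  have hminpos : 1 ≤ min (n.factorization ℓ) (N.factorization ℓ) :=
    le_min hℓn (by omega)
  have hE : (N / d1).factorization ℓ < s.factorization ℓ := by
    rw [hfNd1]
    omega
  rw [hfL] at hsL
  exact absurd hsL (not_le.mpr (max_lt hE hℓ))

lemma fixed_iff {F : Type*} [Field F] (q : ℕ) (hq : 2 ≤ q) {t : F} (ht : t ≠ 0) :
    t ^ q = t ↔ t ^ (q - 1) = 1 := by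
  have h1 : q = (q - 1) + 1 := by omega
  constructor
  · intro h
    have h2 : t ^ (q - 1) * t = 1 * t := by
      rw [← pow_succ, ← h1, h, one_mul]
    exact mul_right_cancel₀ ht h2
  · intro h
    rw [h1, pow_succ, h, one_mul]

/-- the set of values reachable in `k` steps of `gm` from the "torus" -/
def Img {F : Type*} [Field F] (q : ℕ) (Cc : F) (nn : ℕ) (k : ℕ) (t : F) : Prop :=
  ∃ z : F, z ≠ 0 ∧ z ^ q = z ∧ (gm Cc nn)^[k] z = t

section ImgLemmas

variable {F : Type*} [Field F] {q : ℕ} {Cc : F} {nn : ℕ}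
variable (hq3 : 3 ≤ q) (hnn : 1 ≤ nn) (hCc0 : Cc ≠ 0) (hCcq : Cc ^ q = Cc)

include hCc0 hCcq in
lemma gm_mem {z : F} (hz0 : z ≠ 0) (hzq : z ^ q = z) :
    gm Cc nn z ≠ 0 ∧ (gm Cc nn z) ^ q = gm Cc nn z := by
  constructor
  · exact mul_ne_zero hCc0 (pow_ne_zero _ hz0)
  · rw [gm, mul_pow, pow_right_comm, hzq, hCcq]

include hCc0 hCcq in
lemma gm_iter_mem (k : ℕ) {z : F} (hz0 : z ≠ 0) (hzq : z ^ q = z) :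
    (gm Cc nn)^[k] z ≠ 0 ∧ ((gm Cc nn)^[k] z) ^ q = (gm Cc nn)^[k] z := by
  induction k with
  | zero => exact ⟨hz0, hzq⟩
  | succ k ih =>
    rw [Function.iterate_succ_apply']
    exact gm_mem hCc0 hCcq ih.1 ih.2

include hCc0 hCcq in
lemma img_ne_zero {k : ℕ} {t : F} (h : Img q Cc nn k t) : t ≠ 0 ∧ t ^ q = t := by
  obtain ⟨z, hz0, hzq, rfl⟩ := h
  exact gm_iter_mem hCc0 hCcq k hz0 hzq

include hCc0 hCcq in
lemma img_succ_imp' {k : ℕ} {t : F} (h : Img q Cc nn (k + 1) t) : Img q Cc nn k t := by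
  obtain ⟨z, hz0, hzq, hit⟩ := h
  refine ⟨gm Cc nn z, (gm_mem hCc0 hCcq hz0 hzq).1, (gm_mem hCc0 hCcq hz0 hzq).2, ?_⟩
  rw [← Function.iterate_succ_apply]
  exact hit

include hCc0 hCcq in
lemma img_mono {j k : ℕ} (hjk : j ≤ k) {t : F} (h : Img q Cc nn k t) : Img q Cc nn j t := by
  obtain ⟨d, rfl⟩ := Nat.exists_eq_add_of_le hjk
  induction d with
  | zero => simpa using h
  | succ d ih =>
    exact ih (by omega) (img_succ_imp' hCc0 hCcq (by rwa [Nat.add_succ] at h))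

lemma img_step {k : ℕ} {t : F} (h : Img q Cc nn k t) : Img q Cc nn (k + 1) (gm Cc nn t) := by
  obtain ⟨z, hz0, hzq, hit⟩ := h
  exact ⟨z, hz0, hzq, by rw [Function.iterate_succ_apply', hit]⟩

lemma img_iter_step (d : ℕ) {k : ℕ} {t : F} (h : Img q Cc nn k t) :
    Img q Cc nn (k + d) ((gm Cc nn)^[d] t) := by
  induction d with
  | zero => simpa using h
  | succ d ih =>
    rw [Function.iterate_succ_apply']
    exact img_step ih

end ImgLemmas

section CritLemmas

variable {F : Type*} [Field F] {q : ℕ} {Cc : F} {nn : ℕ}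

/-- transfer of the criterion to the field, for the `gm`-dynamics -/
lemma img_iff_crit (hq3 : 3 ≤ q) (hnn : 1 ≤ nn) (hCc0 : Cc ≠ 0) (hCcq : Cc ^ q = Cc)
    (ζ : Fˣ) (hζord : orderOf ζ = q - 1)
    (hζgen : ∀ x : Fˣ, x ^ (q - 1) = 1 → ∃ i : ℤ, x = ζ ^ i)
    (k : ℕ) {t : F} (ht0 : t ≠ 0) (htq : t ^ q = t) :
    Img q Cc nn k t ↔
      t ^ ((q - 1) / Nat.gcd (nn ^ k) (q - 1)) =
        ((gm Cc nn)^[k] 1) ^ ((q - 1) / Nat.gcd (nn ^ k) (q - 1)) := by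
  have hN0 : 0 < q - 1 := by omega
  have hCk := gm_iter_mem (nn := nn) hCc0 hCcq k (one_ne_zero (α := F)) (one_pow q)
  have hCk0 : (gm Cc nn)^[k] 1 ≠ 0 := hCk.1
  have hCkN : ((gm Cc nn)^[k] 1) ^ (q - 1) = 1 := (fixed_iff q (by omega) hCk0).mp hCk.2
  have htN : t ^ (q - 1) = 1 := (fixed_iff q (by omega) ht0).mp htq
  have hmm : 0 < nn ^ k := pow_pos (by omega : 0 < nn) k
  -- unit lifts
  set tu : Fˣ := Units.mk0 t ht0 with htu
  set cu : Fˣ := Units.mk0 ((gm Cc nn)^[k] 1) hCk0 with hcu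
  have htuN : tu ^ (q - 1) = 1 := by
    ext; push_cast [htu]; exact htN
  have hcuN : cu ^ (q - 1) = 1 := by
    ext; push_cast [hcu]; exact hCkN
  have hcrit := pow_coset_criterion ζ (q - 1) hN0 hζord hζgen (nn ^ k) hmm tu cu htuN hcuN
  constructor
  · intro himg
    obtain ⟨z, hz0, hzq, hit⟩ := himg
    have hzN : z ^ (q - 1) = 1 := (fixed_iff q (by omega) hz0).mp hzq
    have hform : (gm Cc nn)^[k] 1 * z ^ nn ^ k = t := by
      rw [← gm_iterate]; exact hit
    have hexu : ∃ zu : Fˣ, zu ^ (q - 1) = 1 ∧ cu * zu ^ (nn ^ k) = tu := by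
      refine ⟨Units.mk0 z hz0, ?_, ?_⟩
      · ext; push_cast; exact hzN
      · ext; push_cast [hcu, htu]; exact hform
    have := hcrit.mp hexu
    have hval := congrArg (Units.val) this
    push_cast [htu, hcu] at hval
    exact hval
  · intro hcriteq
    have : tu ^ ((q - 1) / Nat.gcd (nn ^ k) (q - 1)) =
        cu ^ ((q - 1) / Nat.gcd (nn ^ k) (q - 1)) := by
      ext; push_cast [htu, hcu]; exact hcriteq
    obtain ⟨zu, hzuN, hzueq⟩ := hcrit.mpr this
    refine ⟨(zu : F), zu.ne_zero, ?_, ?_⟩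
    · apply (fixed_iff q (by omega) zu.ne_zero).mpr
      have := congrArg (Units.val) hzuN
      push_cast at this
      exact this
    · rw [gm_iterate]
      have := congrArg (Units.val) hzueq
      push_cast [htu, hcu] at this
      exact this

end CritLemmas

section Per

variable {F : Type*} [Field F] {q : ℕ} {Cc : F} {nn : ℕ} {r s e : ℕ}
variable (hq3 : 3 ≤ q) (hnn : 1 ≤ nn) (hCc0 : Cc ≠ 0) (hCcq : Cc ^ q = Cc)
variable (hsr : q - 1 = s * r)
variable (hge1 : Nat.gcd (nn ^ (e + 1)) (q - 1) = s)
variable (hge2 : Nat.gcd (nn ^ (e + 2)) (q - 1) = s)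
variable (hsdvd : s ∣ nn ^ (e + 1))
variable (ζ : Fˣ) (hζord : orderOf ζ = q - 1)
variable (hζgen : ∀ x : Fˣ, x ^ (q - 1) = 1 → ∃ i : ℤ, x = ζ ^ i)

include hq3 hnn hCc0 hCcq hsr hge1 hge2 hsdvd hζord hζgen in
lemma img_e1_to_e2 {t : F} (h : Img q Cc nn (e + 1) t) : Img q Cc nn (e + 2) t := by
  obtain ⟨ht0, htq⟩ := img_ne_zero hCc0 hCcq h
  have hCcN : Cc ^ (q - 1) = 1 := (fixed_iff q (by omega) hCc0).mp hCcq
  have hsN : s ∣ q - 1 := ⟨r, hsr⟩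
  have hcrit1 := (img_iff_crit hq3 hnn hCc0 hCcq ζ hζord hζgen (e + 1) ht0 htq).mp h
  rw [hge1] at hcrit1
  apply (img_iff_crit hq3 hnn hCc0 hCcq ζ hζord hζgen (e + 2) ht0 htq).mpr
  rw [hge2, gm_one_succ, mul_pow, ← pow_mul]
  obtain ⟨w, hw⟩ := hsdvd
  have hexp : nn ^ (e + 1) * ((q - 1) / s) = w * (q - 1) := by
    rw [hw, mul_comm s w, mul_assoc, Nat.mul_div_cancel' hsN]
  rw [hexp, mul_comm w, pow_mul, hCcN, one_pow, mul_one]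
  exact hcrit1

include hq3 hCc0 hCcq hge2 hsdvd in
lemma gm_inj_on_img {tP tQ : F} (hP : Img q Cc nn (e + 1) tP) (hQ : Img q Cc nn (e + 1) tQ)
    (heq : gm Cc nn tP = gm Cc nn tQ) : tP = tQ := by
  obtain ⟨zP, hzP0, hzPq, hitP⟩ := hP
  obtain ⟨zQ, hzQ0, hzQq, hitQ⟩ := hQ
  rw [gm_iterate] at hitP hitQ
  have hC1mem := gm_iter_mem (nn := nn) hCc0 hCcq (e + 1) (one_ne_zero (α := F)) (one_pow q)
  have hC10 : (gm Cc nn)^[e + 1] 1 ≠ 0 := hC1mem.1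
  have h1 : tP ^ nn = tQ ^ nn := mul_left_cancel₀ hCc0 heq
  have h2 : zP ^ nn ^ (e + 2) = zQ ^ nn ^ (e + 2) := by
    have h3 : ((gm Cc nn)^[e + 1] 1 * zP ^ nn ^ (e + 1)) ^ nn
        = ((gm Cc nn)^[e + 1] 1 * zQ ^ nn ^ (e + 1)) ^ nn := by
      rw [hitP, hitQ]; exact h1
    rw [mul_pow, mul_pow, ← pow_mul, ← pow_mul, ← pow_succ] at h3
    exact mul_left_cancel₀ (pow_ne_zero _ hC10) h3
  have hw1 : (zP / zQ) ^ nn ^ (e + 2) = 1 := by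
    rw [div_pow, h2, div_self (pow_ne_zero _ hzQ0)]
  have hwN : (zP / zQ) ^ (q - 1) = 1 := by
    rw [div_pow, (fixed_iff q (by omega) hzP0).mp hzPq,
      (fixed_iff q (by omega) hzQ0).mp hzQq, div_one]
  have hwg : (zP / zQ) ^ s = 1 := by
    have := pow_gcd_eq_one.mpr (And.intro hw1 hwN)
    rwa [hge2] at this
  obtain ⟨w', hw'⟩ := hsdvd
  have hwE1 : (zP / zQ) ^ nn ^ (e + 1) = 1 := by
    rw [hw', pow_mul, hwg, one_pow]
  have h4 : zP ^ nn ^ (e + 1) = zQ ^ nn ^ (e + 1) := by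
    rw [div_pow] at hwE1
    exact (div_eq_one_iff_eq (pow_ne_zero _ hzQ0)).mp hwE1
  rw [← hitP, ← hitQ, h4]

include hq3 hCc0 hCcq hge2 hsdvd in
lemma img_periodic [Finite F] {t : F} (h : Img q Cc nn (e + 1) t) :
    ∃ k, 1 ≤ k ∧ (gm Cc nn)^[k] t = t := by
  refine periodic_of_injOn (S := {t : F | Img q Cc nn (e + 1) t}) ?_ ?_ h
  · intro x hx
    exact img_succ_imp' hCc0 hCcq (img_step hx)
  · intro x hx y hy hxy
    exact gm_inj_on_img hq3 hCc0 hCcq hge2 hsdvd hx hy hxy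

include hCc0 hCcq in
lemma periodic_imp_img {t : F} (ht0 : t ≠ 0) (htq : t ^ q = t)
    {k : ℕ} (hk : 1 ≤ k) (hfix : (gm Cc nn)^[k] t = t) : Img q Cc nn (e + 1) t := by
  have hmul : ∀ j, (gm Cc nn)^[j * k] t = t := by
    intro j
    induction j with
    | zero => simp
    | succ j ih =>
      rw [Nat.succ_mul, Function.iterate_add_apply, hfix, ih]
  have h1 : Img q Cc nn ((e + 1) * k) t := ⟨t, ht0, htq, hmul (e + 1)⟩
  exact img_mono hCc0 hCcq (Nat.le_mul_of_pos_right _ (by omega)) h1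

end Per



lemma charp_of_card (F : Type*) [Field F] [Fintype F] (p mq : ℕ) (hp : p.Prime)
    (hcard : Fintype.card F = p ^ mq) (hmq : 0 < mq) : CharP F p := by
  haveI := ringChar.charP F
  obtain ⟨n', hprime, hcard'⟩ := FiniteField.card F (ringChar F)
  have h1 : ringChar F ∣ p ^ mq := by
    rw [← hcard, hcard']
    exact dvd_pow_self _ (by exact_mod_cast n'.ne_zero)
  have h2 : ringChar F = p := by
    have := hprime.dvd_of_dvd_pow h1
    exact (Nat.prime_dvd_prime_iff_eq hprime hp).mp this
  rw [← h2]
  infer_instance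

section Alg

variable {F : Type*} [Field F] (q : ℕ) {a c : F} (n2 : ℕ)
variable (haddq : ∀ x y : F, (x + y) ^ q = x ^ q + y ^ q)
variable (hXqq : ∀ x : F, (x ^ q) ^ q = x)
variable (ha : a ^ q = a) (hc : c ^ q = c)

include haddq in
lemma sub_q : ∀ x y : F, (x - y) ^ q = x ^ q - y ^ q := by
  intro x y
  have h := haddq (x - y) y
  rw [sub_add_cancel] at h
  rw [eq_sub_iff_add_eq]
  exact h.symm

include haddq hXqq ha hc in
lemma conj_fX (hodd : Odd (n2 + 1)) (X : F) :
    ((c * X ^ q + a * X) * (X ^ q - X) ^ (n2 + 1)) ^ q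
      = -((c * X + a * X ^ q) * (X ^ q - X) ^ (n2 + 1)) := by
  have hsubq := sub_q q haddq
  have hD : ((X ^ q - X) ^ (n2 + 1)) ^ q = -((X ^ q - X) ^ (n2 + 1)) := by
    rw [pow_right_comm, hsubq, hXqq, show X - X ^ q = -(X ^ q - X) from by ring,
      hodd.neg_pow]
  have hB : (c * X ^ q + a * X) ^ q = c * X + a * X ^ q := by
    rw [haddq, mul_pow, mul_pow, ha, hc, hXqq]
  rw [mul_pow, hB, hD]
  ring

end Alg


end Stmt10

open Stmt10

/-- `n` even, `n ≥ 2`, `a² ≠ c²`. For every nonzero periodic point `X₀`,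
the maximum depth at which some `Y` hangs from `X₀` is exactly `e + 1`, where `e` is the
largest integer with `𝔤(nᵉ) < s`. -/
theorem stmt_10 (p m q : ℕ) (hp : p.Prime) (hpodd : p ≠ 2) (hm : 0 < m) (hq : q = p ^ m)
    (F : Type*) [Field F] [Fintype F] (hF : Fintype.card F = q ^ 2)
    (a c : F) (ha : a ^ q = a) (hc : c ^ q = c)
    (n : ℕ) (hn2 : 2 ≤ n) (hneven : Even n)
    (hac : a ^ 2 ≠ c ^ 2)
    (f : F → F) (hf : ∀ X, f X = (c * X ^ q + a * X) * (X ^ q - X) ^ (n - 1))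
    (r s : ℕ) (hrdvd : r ∣ q - 1) (hrcop : Nat.Coprime r n)
    (hrmax : ∀ r' : ℕ, r' ∣ q - 1 → Nat.Coprime r' n → r' ≤ r)
    (hsr : q - 1 = s * r)
    (e : ℕ) (he : Nat.gcd (n ^ e) (q - 1) < s)
    (hemax : ∀ e' : ℕ, Nat.gcd (n ^ e') (q - 1) < s → e' ≤ e)
    (Periodic : F → Prop) (hPer : ∀ X : F, Periodic X ↔ ∃ k : ℕ, 1 ≤ k ∧ f^[k] X = X)
    (Hangs : ℕ → F → F → Prop)
    (hHangs : ∀ (k : ℕ) (Y X₀ : F),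
      Hangs k Y X₀ ↔ f^[k] Y = X₀ ∧ ∀ i : ℕ, i < k → ¬ Periodic (f^[i] Y)) :
    ∀ X₀ : F, X₀ ≠ 0 → Periodic X₀ →
      (∃ Y : F, Hangs (e + 1) Y X₀) ∧
      (∀ (k : ℕ) (Y : F), Hangs k Y X₀ → k ≤ e + 1) := by
  intro X₀ hX₀ne hX₀per
  have hq3 : 3 ≤ q := by
    have h1 : 2 ≤ p := hp.two_le
    have h3 : p ≤ p ^ m := Nat.le_self_pow (by omega) p
    omega
  obtain ⟨n2, rfl⟩ : ∃ n2, n = n2 + 2 := ⟨n - 2, by omega⟩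
  have hf' : ∀ X, f X = (c * X ^ q + a * X) * (X ^ q - X) ^ (n2 + 1) := by
    intro X
    rw [hf, show n2 + 2 - 1 = n2 + 1 from by omega]
  have heven : Even (n2 + 2) := hneven
  have hevenn2 : Even n2 := by
    rcases heven with ⟨w, hw⟩
    exact ⟨w - 1, by omega⟩
  have hodd : Odd (n2 + 1) := hevenn2.add_one
  obtain ⟨gdvd, hsdvd, hge1, hge2, hlcm⟩ :=
    nat_core q (n2 + 2) r s e hq3 (by omega) hrdvd hrcop hrmax hsr he hemax
  have hs0 : s ≠ 0 := by
    rintro rfl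
    simp at hsr
    omega
  have hsN : s ∣ q - 1 := ⟨r, hsr⟩
  haveI hfact : Fact p.Prime := ⟨hp⟩
  haveI hcharp : CharP F p :=
    charp_of_card F p (2 * m) hp (by rw [hF, hq, ← pow_mul, mul_comm]) (by omega)
  have haddq : ∀ x y : F, (x + y) ^ q = x ^ q + y ^ q := by
    intro x y
    rw [hq]
    exact add_pow_char_pow x y p m
  have hsubq := sub_q q haddq
  have hXqq : ∀ x : F, (x ^ q) ^ q = x := by
    intro x
    rw [← pow_mul, ← sq, ← hF]
    exact FiniteField.pow_card x
  have h2ne : (2 : F) ≠ 0 := by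
    intro h
    have h2 : (p : ℕ) ∣ 2 := (CharP.cast_eq_zero_iff F p 2).mp (by exact_mod_cast h)
    have := (Nat.prime_dvd_prime_iff_eq hp Nat.prime_two).mp h2
    exact hpodd this
  have hacsub : c - a ≠ 0 := by
    intro h
    exact hac (by rw [sub_eq_zero.mp h])
  have hacadd : a + c ≠ 0 := by
    intro h
    apply hac
    rw [show c = -a from by linear_combination h]
    ring
  set Cc : F := (c - a) * (a + c) ^ (n2 + 2) with hCc_def
  have hCc0 : Cc ≠ 0 := mul_ne_zero hacsub (pow_ne_zero _ hacadd)
  have hacq : (a + c) ^ q = a + c := by rw [haddq, ha, hc]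
  have hcaq : (c - a) ^ q = c - a := by rw [hsubq, ha, hc]
  have hCcq : Cc ^ q = Cc := by rw [hCc_def, mul_pow, hcaq, pow_right_comm, hacq]
  set u : F → F := fun X => (X + X ^ q) * (X ^ q - X) ^ (n2 + 2) with hu_def
  have hfq : ∀ X, (f X) ^ q = -((c * X + a * X ^ q) * (X ^ q - X) ^ (n2 + 1)) := by
    intro X
    rw [hf']
    exact conj_fX q n2 haddq hXqq ha hc hodd X
  have hA1 : ∀ X, f X + (f X) ^ q = (c - a) * (X ^ q - X) ^ (n2 + 2) := by
    intro X
    rw [hfq, hf']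
    ring
  have hA2 : ∀ X, f X - (f X) ^ q = (a + c) * (X + X ^ q) * (X ^ q - X) ^ (n2 + 1) := by
    intro X
    rw [hfq, hf']
    ring
  have hu_frob : ∀ X, (u X) ^ q = u X := by
    intro X
    have hDq : ((X ^ q - X) ^ (n2 + 2)) ^ q = (X ^ q - X) ^ (n2 + 2) := by
      rw [pow_right_comm (X ^ q - X) (n2 + 2) q, hsubq, hXqq,
        show X - X ^ q = -(X ^ q - X) from by ring, heven.neg_pow]
    simp only [hu_def]
    rw [mul_pow, haddq, hXqq, hDq]
    ring
  have hA3 : ∀ X, u (f X) = Cc * (u X) ^ (n2 + 2) := by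
    intro X
    have h2 : (f X) ^ q - f X = -((a + c) * (X + X ^ q) * (X ^ q - X) ^ (n2 + 1)) := by
      rw [← neg_sub, hA2]
    simp only [hu_def]
    rw [hA1, h2, heven.neg_pow, hCc_def]
    generalize (X ^ q - X : F) = D
    generalize (X + X ^ q : F) = S
    generalize (c - a : F) = B
    generalize (a + c : F) = A
    ring
  have hu_iter : ∀ (k : ℕ) (X : F), u (f^[k] X) = (gm Cc (n2 + 2))^[k] (u X) := by
    intro k
    induction k with
    | zero => intro X; simp
    | succ k ih =>
      intro X
      rw [Function.iterate_succ_apply', Function.iterate_succ_apply', hA3, ih X]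
      rfl
  have hfix_zero : ∀ X : F, X ^ q = X → f X = 0 := by
    intro X h
    rw [hf', h, sub_self, zero_pow (by omega : n2 + 1 ≠ 0), mul_zero]
  have hf00 : ∀ j : ℕ, f^[j] (0 : F) = 0 := by
    intro j
    induction j with
    | zero => rfl
    | succ j ih =>
      rw [Function.iterate_succ_apply', ih]
      exact hfix_zero 0 (by rw [zero_pow (by omega : q ≠ 0)])
  obtain ⟨k₀, hk₀1, hk₀fix⟩ := (hPer X₀).mp hX₀per
  have hu0 : u X₀ ≠ 0 := by
    intro hzero
    simp only [hu_def] at hzero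
    rcases mul_eq_zero.mp hzero with hS | hD
    · have hfql : f X₀ - (f X₀) ^ q = 0 := by
        rw [hA2 X₀, hS]
        ring
      have hffix : (f X₀) ^ q = f X₀ := (sub_eq_zero.mp hfql).symm
      have hff0 : f (f X₀) = 0 := hfix_zero _ hffix
      have h2k : f^[2 * k₀] X₀ = X₀ := by
        rw [two_mul, Function.iterate_add_apply, hk₀fix, hk₀fix]
      have h2' : f^[2] X₀ = 0 := by
        rw [Function.iterate_succ_apply', Function.iterate_one]
        exact hff0
      have h2k0 : f^[2 * k₀] X₀ = 0 := by
        rw [show 2 * k₀ = (2 * k₀ - 2) + 2 from by omega, Function.iterate_add_apply, h2']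
        exact hf00 _
      exact hX₀ne (by rw [← h2k, h2k0])
    · have hDfix : X₀ ^ q = X₀ :=
        sub_eq_zero.mp (pow_eq_zero_iff (by omega : n2 + 2 ≠ 0) |>.mp hD)
      have hfX0 : f X₀ = 0 := hfix_zero _ hDfix
      have hk0' : f^[k₀] X₀ = 0 := by
        rw [show k₀ = (k₀ - 1) + 1 from by omega, Function.iterate_add_apply,
          Function.iterate_one, hfX0]
        exact hf00 _
      exact hX₀ne (by rw [← hk₀fix, hk0'])
  obtain ⟨ζ, hζord, hζgen⟩ := exists_zeta F q hq3 hF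
  -- fiber injectivity
  have hA6 : ∀ P Q : F, u P ≠ 0 → u P = u Q → f P = f Q → P = Q := by
    intro P Q huP huv hfPQ
    have huPparts : (P + P ^ q) ≠ 0 ∧ (P ^ q - P) ^ (n2 + 2) ≠ 0 := by
      simp only [hu_def] at huP
      exact mul_ne_zero_iff.mp huP
    have hDn : (P ^ q - P) ^ (n2 + 2) = (Q ^ q - Q) ^ (n2 + 2) := by
      have h1 : (c - a) * (P ^ q - P) ^ (n2 + 2) = (c - a) * (Q ^ q - Q) ^ (n2 + 2) := by
        rw [← hA1 P, ← hA1 Q, hfPQ]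
      exact mul_left_cancel₀ hacsub h1
    have hS : P + P ^ q = Q + Q ^ q := by
      simp only [hu_def] at huv
      rw [hDn] at huv
      have hQD : (Q ^ q - Q) ^ (n2 + 2) ≠ 0 := by rw [← hDn]; exact huPparts.2
      exact mul_right_cancel₀ hQD huv
    have hDn1 : (P ^ q - P) ^ (n2 + 1) = (Q ^ q - Q) ^ (n2 + 1) := by
      have h1 := hA2 P
      have h2 := hA2 Q
      rw [hfPQ] at h1
      rw [h1, hS] at h2
      exact mul_left_cancel₀ (mul_ne_zero hacadd (hS ▸ huPparts.1)) h2
    have hD0 : P ^ q - P ≠ 0 := by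
      intro h
      exact huPparts.2 (by rw [h, zero_pow (by omega : n2 + 2 ≠ 0)])
    have hD : P ^ q - P = Q ^ q - Q := by
      have h1 : (P ^ q - P) * (P ^ q - P) ^ (n2 + 1)
          = (Q ^ q - Q) * (Q ^ q - Q) ^ (n2 + 1) := by
        rw [← pow_succ', ← pow_succ', hDn]
      rw [← hDn1] at h1
      exact mul_right_cancel₀ (pow_ne_zero _ hD0) h1
    have h2P : (2 : F) * P = 2 * Q := by
      calc (2 : F) * P = (P + P ^ q) - (P ^ q - P) := by ring
        _ = (Q + Q ^ q) - (Q ^ q - Q) := by rw [hS, hD]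
        _ = 2 * Q := by ring
    exact mul_left_cancel₀ h2ne h2P
  -- preimage construction
  have hA7 : ∀ Z t : F, u Z ≠ 0 → t ≠ 0 → t ^ q = t → Cc * t ^ (n2 + 2) = u Z →
      ∃ W : F, f W = Z ∧ u W = t := by
    intro Z t huZ ht0 htq hCt
    have hparts : (Z + Z ^ q) ≠ 0 ∧ (Z ^ q - Z) ^ (n2 + 2) ≠ 0 := by
      simp only [hu_def] at huZ
      exact mul_ne_zero_iff.mp huZ
    have hη0 : Z ^ q - Z ≠ 0 := by
      intro h
      exact hparts.2 (by rw [h, zero_pow (by omega : n2 + 2 ≠ 0)])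
    set η : F := Z ^ q - Z with hη
    set v : F := (a + c) * t / η with hv
    have hv0 : v ≠ 0 := div_ne_zero (mul_ne_zero hacadd ht0) hη0
    have hηq : η ^ q = -η := by
      rw [hη, hsubq, hXqq]
      ring
    have hvq : v ^ q = -v := by
      rw [hv, div_pow, mul_pow, hacq, htq, hηq, div_neg]
    set x2 : F := t / v ^ (n2 + 2) with hx2
    have hvn0 : v ^ (n2 + 2) ≠ 0 := pow_ne_zero _ hv0
    have hx20 : x2 ≠ 0 := div_ne_zero ht0 hvn0
    have hvnq : (v ^ (n2 + 2)) ^ q = v ^ (n2 + 2) := by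
      rw [pow_right_comm, hvq, heven.neg_pow]
    have hx2q : x2 ^ q = x2 := by rw [hx2, div_pow, htq, hvnq]
    set W : F := (x2 + v) / 2 with hW
    have h2q : (2 : F) ^ q = 2 := by
      have h := haddq 1 1
      rw [one_pow] at h
      norm_num at h ⊢
      exact h
    have hWq : W ^ q = (x2 - v) / 2 := by
      rw [hW, div_pow, haddq, hx2q, hvq, h2q]
      ring
    have hWD : W ^ q - W = -v := by
      rw [hWq, hW]
      field_simp
      ring
    have hWS : W + W ^ q = x2 := by
      rw [hWq, hW]
      field_simp
      ring
    have hterm2 : (W ^ q - W) ^ (n2 + 2) = v ^ (n2 + 2) := by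
      rw [hWD, heven.neg_pow]
    have huW : u W = t := by
      simp only [hu_def]
      rw [hWS, hterm2, hx2]
      exact div_mul_cancel₀ t hvn0
    have hkey1 : (c - a) * v ^ (n2 + 2) = Z + Z ^ q := by
      have hveq : v ^ (n2 + 2) = (a + c) ^ (n2 + 2) * t ^ (n2 + 2) / η ^ (n2 + 2) := by
        rw [hv, div_pow, mul_pow]
      rw [hveq]
      rw [hCc_def] at hCt
      simp only [hu_def] at hCt
      rw [← hη] at hCt
      field_simp
      linear_combination hCt
    have hkey2 : (a + c) * (x2 * v ^ (n2 + 1)) = η := by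
      have hstep : x2 * v ^ (n2 + 1) = t / v := by
        rw [hx2]
        field_simp
        ring
      rw [hstep, hv]
      field_simp
    have hterm1 : (W ^ q - W) ^ (n2 + 1) = -(v ^ (n2 + 1)) := by
      rw [hWD, hodd.neg_pow]
    have hfW : f W = Z := by
      rw [hf', hterm1, hWq, hW]
      have hZ2 : Z = ((Z + Z ^ q) - η) / 2 := by
        rw [hη]
        field_simp
        ring
      rw [hZ2, ← hkey1, ← hkey2]
      field_simp
      ring
    exact ⟨W, hfW, huW⟩
  -- periodicity bridge
  have hPerF : ∀ X : F, u X ≠ 0 →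
      ((∃ k, 1 ≤ k ∧ f^[k] X = X) ↔ Img q Cc (n2 + 2) (e + 1) (u X)) := by
    intro X huX
    constructor
    · rintro ⟨k, hk1, hkfix⟩
      exact periodic_imp_img hCc0 hCcq huX (hu_frob X) hk1 (by rw [← hu_iter, hkfix])
    · intro him
      refine periodic_of_injOn (g := f)
        (S := {Z : F | Img q Cc (n2 + 2) (e + 1) (u Z)}) ?_ ?_ him
      · intro x hx
        have h1 : Img q Cc (n2 + 2) (e + 2) (gm Cc (n2 + 2) (u x)) := img_step hx
        have h2 := img_succ_imp' hCc0 hCcq h1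
        show Img q Cc (n2 + 2) (e + 1) (u (f x))
        have h3 : u (f x) = gm Cc (n2 + 2) (u x) := hA3 x
        rw [h3]
        exact h2
      · intro x hx y hy hxy
        have hgm : gm Cc (n2 + 2) (u x) = gm Cc (n2 + 2) (u y) := by
          have h1 : u (f x) = u (f y) := by rw [hxy]
          rw [hA3, hA3] at h1
          exact h1
        have huxy : u x = u y := gm_inj_on_img hq3 hCc0 hCcq hge2 hsdvd hx hy hgm
        exact hA6 x y (img_ne_zero hCc0 hCcq hx).1 huxy hxy
  -- lifting lemma
  have hlift : ∀ (j : ℕ) (Z t : F), u Z ≠ 0 → t ≠ 0 → t ^ q = t →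
      (gm Cc (n2 + 2))^[j] t = u Z → ∃ Y, f^[j] Y = Z ∧ u Y = t := by
    intro j
    induction j with
    | zero =>
      intro Z t huZ ht0 htq hit
      simp only [Function.iterate_zero_apply] at hit
      exact ⟨Z, rfl, hit.symm⟩
    | succ j ih =>
      intro Z t huZ ht0 htq hit
      rw [Function.iterate_succ_apply] at hit
      have hgmt := gm_mem (nn := n2 + 2) hCc0 hCcq ht0 htq
      obtain ⟨Y', hY'1, hY'2⟩ := ih Z (gm Cc (n2 + 2) t) huZ hgmt.1 hgmt.2 hit
      have huY' : u Y' ≠ 0 := by rw [hY'2]; exact hgmt.1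
      obtain ⟨W, hW1, hW2⟩ := hA7 Y' t huY' ht0 htq (by rw [hY'2]; rfl)
      refine ⟨W, ?_, hW2⟩
      rw [Function.iterate_succ_apply, hW1, hY'1]
  -- main: existence
  have hu0img : Img q Cc (n2 + 2) (e + 1) (u X₀) :=
    (hPerF X₀ hu0).mp ⟨k₀, hk₀1, hk₀fix⟩
  set zF : F := ((ζ : Fˣ) : F) with hzF_def
  have hzF0 : zF ≠ 0 := Units.ne_zero ζ
  have hzFN : zF ^ (q - 1) = 1 := by
    have h1 : ζ ^ (q - 1) = 1 := by rw [← hζord]; exact pow_orderOf_eq_one ζ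
    have h2 := congrArg Units.val h1
    push_cast at h2
    exact h2
  have hzFq : zF ^ q = zF := (fixed_iff q (by omega) hzF0).mpr hzFN
  have hzF_ord : ∀ M : ℕ, zF ^ M = 1 → (q - 1) ∣ M := by
    intro M hM
    have h1 : ζ ^ M = 1 := by
      apply Units.ext
      push_cast
      exact hM
    rw [← hζord]
    exact orderOf_dvd_iff_pow_eq_one.mpr h1
  set L : ℕ := Nat.lcm ((q - 1) / Nat.gcd (n2 + 2) (q - 1))
      (Nat.gcd ((n2 + 2) ^ e) (q - 1)) with hL_def
  have hLlcm1 : ((q - 1) / Nat.gcd (n2 + 2) (q - 1)) ∣ L := Nat.dvd_lcm_left _ _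
  have hLlcm2 : Nat.gcd ((n2 + 2) ^ e) (q - 1) ∣ L := Nat.dvd_lcm_right _ _
  have hNdvdLn : (q - 1) ∣ L * (n2 + 2) := by
    obtain ⟨w, hw⟩ := hLlcm1
    obtain ⟨n', hn'⟩ := Nat.gcd_dvd_left (n2 + 2) (q - 1)
    refine ⟨w * n', ?_⟩
    calc L * (n2 + 2)
        = (q - 1) / Nat.gcd (n2 + 2) (q - 1) * w * (Nat.gcd (n2 + 2) (q - 1) * n') := by
          rw [← hw, ← hn']
      _ = Nat.gcd (n2 + 2) (q - 1) * ((q - 1) / Nat.gcd (n2 + 2) (q - 1)) * (w * n') := by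
          ring
      _ = (q - 1) * (w * n') := by rw [Nat.mul_div_cancel' (Nat.gcd_dvd_right (n2 + 2) (q - 1))]
  obtain ⟨z0, hz00, hz0q, hz0it⟩ := hu0img
  have htstar_pack := gm_iter_mem (nn := n2 + 2) hCc0 hCcq e hz00 hz0q
  set tstar : F := (gm Cc (n2 + 2))^[e] z0 with htstar_def
  have htstar0 : tstar ≠ 0 := htstar_pack.1
  have htstarq : tstar ^ q = tstar := htstar_pack.2
  have htstar_img : Img q Cc (n2 + 2) e tstar := ⟨z0, hz00, hz0q, rfl⟩
  have hgm_tstar : gm Cc (n2 + 2) tstar = u X₀ := by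
    have hh := Function.iterate_succ_apply' (gm Cc (n2 + 2)) e z0
    rw [htstar_def, ← hh]
    exact hz0it
  have hmain : ∃ t1 : F, t1 ≠ 0 ∧ t1 ^ q = t1 ∧ gm Cc (n2 + 2) t1 = u X₀ ∧
      Img q Cc (n2 + 2) e t1 ∧ ¬ Img q Cc (n2 + 2) (e + 1) t1 := by
    by_cases hcase : Img q Cc (n2 + 2) (e + 1) tstar
    · have ht10 : tstar * zF ^ L ≠ 0 := mul_ne_zero htstar0 (pow_ne_zero _ hzF0)
      have ht1q : (tstar * zF ^ L) ^ q = tstar * zF ^ L := by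
        rw [mul_pow, htstarq, pow_right_comm, hzFq]
      refine ⟨tstar * zF ^ L, ht10, ht1q, ?_, ?_, ?_⟩
      · show Cc * (tstar * zF ^ L) ^ (n2 + 2) = u X₀
        rw [mul_pow, ← pow_mul, ← mul_assoc]
        obtain ⟨w, hw⟩ := hNdvdLn
        rw [hw, pow_mul, hzFN, one_pow, mul_one]
        exact hgm_tstar
      · have hcrit_t := (img_iff_crit hq3 (by omega) hCc0 hCcq ζ hζord hζgen e
          htstar0 htstarq).mp htstar_img
        apply (img_iff_crit hq3 (by omega) hCc0 hCcq ζ hζord hζgen e ht10 ht1q).mpr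
        rw [mul_pow, ← pow_mul]
        obtain ⟨w2, hw2⟩ := hLlcm2
        have hgeN : Nat.gcd ((n2 + 2) ^ e) (q - 1) ∣ q - 1 := Nat.gcd_dvd_right _ _
        have hexp : L * ((q - 1) / Nat.gcd ((n2 + 2) ^ e) (q - 1)) = (q - 1) * w2 := by
          rw [hw2]
          calc Nat.gcd ((n2 + 2) ^ e) (q - 1) * w2 *
                ((q - 1) / Nat.gcd ((n2 + 2) ^ e) (q - 1))
              = Nat.gcd ((n2 + 2) ^ e) (q - 1) *
                ((q - 1) / Nat.gcd ((n2 + 2) ^ e) (q - 1)) * w2 := by ring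
            _ = (q - 1) * w2 := by rw [Nat.mul_div_cancel' hgeN]
        rw [hexp, pow_mul, hzFN, one_pow, mul_one]
        exact hcrit_t
      · intro hcon
        have hc1 := (img_iff_crit hq3 (by omega) hCc0 hCcq ζ hζord hζgen (e + 1)
          htstar0 htstarq).mp hcase
        have hc2 := (img_iff_crit hq3 (by omega) hCc0 hCcq ζ hζord hζgen (e + 1)
          ht10 ht1q).mp hcon
        rw [hge1] at hc1 hc2
        rw [mul_pow, hc1, ← pow_mul] at hc2
        have hCne : ((gm Cc (n2 + 2))^[e + 1] 1) ^ ((q - 1) / s) ≠ 0 :=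
          pow_ne_zero _ (gm_iter_mem (nn := n2 + 2) hCc0 hCcq (e + 1)
            one_ne_zero (one_pow q)).1
        have hz1 : zF ^ (L * ((q - 1) / s)) = 1 := by
          have h5 : ((gm Cc (n2 + 2))^[e + 1] 1) ^ ((q - 1) / s) * zF ^ (L * ((q - 1) / s))
              = ((gm Cc (n2 + 2))^[e + 1] 1) ^ ((q - 1) / s) * 1 := by
            rw [mul_one]
            exact hc2
          exact mul_left_cancel₀ hCne h5
        have hdvd := hzF_ord _ hz1
        have hNs : s * ((q - 1) / s) = q - 1 := Nat.mul_div_cancel' hsN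
        have hNspos : 0 < (q - 1) / s :=
          Nat.div_pos (Nat.le_of_dvd (by omega) hsN) (by omega)
        have hsL : s ∣ L := by
          have h6 : s * ((q - 1) / s) ∣ L * ((q - 1) / s) := by
            rw [hNs]
            exact hdvd
          exact (Nat.mul_dvd_mul_iff_right hNspos).mp h6
        exact hlcm hsL
    · exact ⟨tstar, htstar0, htstarq, hgm_tstar, htstar_img, hcase⟩
  obtain ⟨t1, ht10, ht1q, hgmt1, ht1imgE, ht1not⟩ := hmain
  obtain ⟨z1, hz10, hz1q, hz1it⟩ := ht1imgE
  have hz1it' : (gm Cc (n2 + 2))^[e + 1] z1 = u X₀ := by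
    rw [Function.iterate_succ_apply', hz1it, hgmt1]
  obtain ⟨Y, hY1, hY2⟩ := hlift (e + 1) X₀ z1 hu0 hz10 hz1q hz1it'
  constructor
  · refine ⟨Y, ?_⟩
    rw [hHangs]
    refine ⟨hY1, ?_⟩
    intro i hi
    rw [hPer]
    rintro ⟨k, hk1, hkfix⟩
    have hui : u (f^[i] Y) = (gm Cc (n2 + 2))^[i] z1 := by rw [hu_iter, hY2]
    have hz1i_pack := gm_iter_mem (nn := n2 + 2) hCc0 hCcq i hz10 hz1q
    have himg_i : Img q Cc (n2 + 2) (e + 1) ((gm Cc (n2 + 2))^[i] z1) := by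
      rw [← hui]
      exact (hPerF _ (by rw [hui]; exact hz1i_pack.1)).mp ⟨k, hk1, hkfix⟩
    have hstep := img_iter_step (e - i) himg_i
    rw [← Function.iterate_add_apply, show e - i + i = e from by omega, hz1it] at hstep
    exact ht1not (img_mono hCc0 hCcq (by omega) hstep)
  · intro k Y' hH
    rw [hHangs] at hH
    obtain ⟨hfk, hnp⟩ := hH
    by_contra hk
    have hklarge : e + 1 < k := by omega
    have huY' : u Y' ≠ 0 := by
      intro h0
      apply hu0
      rw [← hfk, hu_iter, h0, gm_iterate,
        zero_pow (pow_pos (by omega : 0 < n2 + 2) k).ne', mul_zero]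
    have hperiodic : Periodic (f^[e + 1] Y') := by
      rw [hPer]
      have himg : Img q Cc (n2 + 2) (e + 1) (u (f^[e + 1] Y')) :=
        ⟨u Y', huY', hu_frob Y', (hu_iter (e + 1) Y').symm⟩
      exact (hPerF _ (img_ne_zero hCc0 hCcq himg).1).mpr himg
    exact hnp (e + 1) hklarge hperiodic
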